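/- Suppose there exists a unit vector w⋄ with γ⋄ := min_i y_i⟨w⋄, x_i⟩ > 0 such that ( (1/n) Σ_i ‖P⋄ x_i‖ ) / ( α ⟨μ, w⋄⟩ ) < γ⋄ / max_i ‖P⋄ x_i‖, where P⋄ = I − w⋄ w⋄ᵀ and μ = (1/n) Σ_i y_i x_i. Then for all i ∈ [n], ⟨μ, y_i x_i⟩ > ((1−α)/(nα)) Σ_{j∈[n]} max{−⟨y_i x_i, y_j x_j⟩, 0}. -/

import Mathlib

open Finset

set_option maxHeartbeats 1000000 in
/-- Existence of a principal direction implies the cone assumption: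
if there is a unit vector `w⋄` with margin `γ⋄ > 0` such that
`((1/n) Σ_i ‖P⋄ x_i‖) / (α ⟨μ, w⋄⟩) < γ⋄ / max_i ‖P⋄ x_i‖`, then for all `i`,
`⟨μ, y_i x_i⟩ > ((1−α)/(nα)) Σ_j max{−⟨y_i x_i, y_j x_j⟩, 0}`. -/
theorem stmt_13 (d n : ℕ) (hn : 0 < n)
    (α : ℝ) (hα : 0 < α) (hα1 : α < 1)
    (x : Fin n → EuclideanSpace ℝ (Fin d)) (y : Fin n → ℝ)
    (hy : ∀ i, y i = 1 ∨ y i = -1)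
    (μ : EuclideanSpace ℝ (Fin d))
    (hμ : μ = ((n : ℝ)⁻¹) • ∑ i, y i • x i)
    (wd : EuclideanSpace ℝ (Fin d)) (hwd : ‖wd‖ = 1)
    (P : EuclideanSpace ℝ (Fin d) → EuclideanSpace ℝ (Fin d))
    (hP : ∀ v, P v = v - (inner ℝ wd v : ℝ) • wd)
    (γ : ℝ)
    (hγ : γ = Finset.univ.inf' ⟨⟨0, hn⟩, Finset.mem_univ _⟩
      (fun i => y i * inner ℝ wd (x i)))
    (hγpos : 0 < γ)
    (hprincipal : (((n : ℝ)⁻¹) * ∑ i, ‖P (x i)‖) / (α * inner ℝ μ wd) <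
      γ / Finset.univ.sup' ⟨⟨0, hn⟩, Finset.mem_univ _⟩ (fun i => ‖P (x i)‖)) :
    ∀ i, ((1 - α) / (n * α)) *
        ∑ j, max (-(inner ℝ (y i • x i) (y j • x j) : ℝ)) 0 <
      inner ℝ μ (y i • x i) := by
  intro i
  have hn' : (0 : ℝ) < n := by exact_mod_cast hn
  set b : Fin n → ℝ := fun j => y j * inner ℝ wd (x j) with hbdef
  set p : Fin n → ℝ := fun j => ‖P (x j)‖ with hpdef
  set M : ℝ := Finset.univ.sup' ⟨⟨0, hn⟩, Finset.mem_univ _⟩ p with hMdef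
  set T : ℝ := ∑ j, p j with hTdef
  set B : ℝ := ∑ j, b j with hBdef
  have hy1 : ∀ j, y j * y j = 1 := by intro j; rcases hy j with h | h <;> simp [h]
  have hwd2 : (inner ℝ wd wd : ℝ) = 1 := by
    rw [real_inner_self_eq_norm_sq, hwd]; norm_num
  have hPinner : ∀ u v : EuclideanSpace ℝ (Fin d),
      (inner ℝ (P u) (P v) : ℝ) = inner ℝ u v - inner ℝ wd u * inner ℝ wd v := by
    intro u v
    rw [hP, hP, inner_sub_left, inner_sub_right, inner_sub_right,
      real_inner_smul_left, real_inner_smul_left, real_inner_smul_right,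
      real_inner_smul_right, hwd2, real_inner_comm v wd, real_inner_comm u wd]
    ring
  have hbγ : ∀ j, γ ≤ b j := by
    intro j; rw [hγ]; exact Finset.inf'_le _ (Finset.mem_univ j)
  have hp0 : ∀ j, 0 ≤ p j := fun j => norm_nonneg _
  have hpM : ∀ j, p j ≤ M := by
    intro j; exact Finset.le_sup' _ (Finset.mem_univ j)
  have hT0 : 0 ≤ T := Finset.sum_nonneg fun j _ => hp0 j
  have hμwd : (inner ℝ μ wd : ℝ) = (n : ℝ)⁻¹ * B := by
    rw [hμ, real_inner_smul_left, sum_inner]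
    congr 1
    refine Finset.sum_congr rfl fun j _ => ?_
    rw [real_inner_smul_left, real_inner_comm]
  have hBγ : (n : ℝ) * γ ≤ B := by
    calc (n : ℝ) * γ = ∑ _j : Fin n, γ := by simp [mul_comm]
    _ ≤ B := Finset.sum_le_sum fun j _ => hbγ j
  have hBpos : 0 < B := lt_of_lt_of_le (by positivity) hBγ
  have hμwdpos : (0 : ℝ) < inner ℝ μ wd := by
    rw [hμwd]
    exact mul_pos (inv_pos.mpr hn') hBpos
  have hMpos : 0 < M := by
    rcases lt_or_ge 0 M with h | h
    · exact h
    · exfalso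
      have hM0 : M = 0 := le_antisymm h (le_trans (hp0 ⟨0, hn⟩) (hpM ⟨0, hn⟩))
      have hz : γ / M = 0 := by rw [hM0, div_zero]
      have h0 : (0:ℝ) ≤ ((n : ℝ)⁻¹ * T) / (α * inner ℝ μ wd) :=
        div_nonneg (mul_nonneg (inv_nonneg.mpr hn'.le) hT0) (mul_pos hα hμwdpos).le
      linarith [hprincipal, hz, h0]
  -- key inequality T * M < α * γ * B
  have hkey : T * M < α * γ * B := by
    rw [hμwd, div_lt_div_iff₀ (mul_pos hα (by positivity)) hMpos] at hprincipal
    have := hprincipal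
    nlinarith [this, hn', hMpos, hT0]
  -- inner values of x in terms of b and P
  have hinner : ∀ j k : Fin n, (inner ℝ (y j • x j) (y k • x k) : ℝ)
      = b j * b k + y j * y k * inner ℝ (P (x j)) (P (x k)) := by
    intro j k
    rw [real_inner_smul_left, real_inner_smul_right, hPinner]
    simp only [hbdef]
    ring
  have hcs : ∀ j k, |(inner ℝ (P (x j)) (P (x k)) : ℝ)| ≤ p j * p k := by
    intro j k; exact abs_real_inner_le_norm _ _
  -- upper bound on max terms
  have hmax : ∀ j, max (-(inner ℝ (y i • x i) (y j • x j) : ℝ)) 0 ≤ M * p j := by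
    intro j
    have h1 := hcs i j
    have h2 := abs_le.1 h1
    have hbij : γ * γ ≤ b i * b j :=
      mul_le_mul (hbγ i) (hbγ j) (le_of_lt hγpos) (le_trans (le_of_lt hγpos) (hbγ i))
    have hyy : |y i * y j| = 1 := by
      rcases hy i with h | h <;> rcases hy j with h' | h' <;> simp [h, h']
    have h3 : |y i * y j * inner ℝ (P (x i)) (P (x j))| ≤ p i * p j := by
      rw [abs_mul, hyy, one_mul]; exact h1
    have h4 := abs_le.1 h3
    have h5 : p i * p j ≤ M * p j := mul_le_mul_of_nonneg_right (hpM i) (hp0 j)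
    apply max_le
    · rw [hinner i j]
      nlinarith [hγpos, h4.1, hbij]
    · positivity
  have hsummax : ∑ j, max (-(inner ℝ (y i • x i) (y j • x j) : ℝ)) 0 ≤ M * T := by
    rw [hTdef, Finset.mul_sum]
    exact Finset.sum_le_sum fun j _ => hmax j
  have hsummax0 : 0 ≤ ∑ j, max (-(inner ℝ (y i • x i) (y j • x j) : ℝ)) 0 :=
    Finset.sum_nonneg fun j _ => le_max_right _ _
  -- lower bound on inner μ (y i • x i)
  have hlow : (n : ℝ)⁻¹ * (γ * B - M * T) ≤ inner ℝ μ (y i • x i) := by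
    have hexp : (inner ℝ μ (y i • x i) : ℝ) = (n : ℝ)⁻¹ * ∑ j, inner ℝ (y j • x j) (y i • x i) := by
      rw [hμ, real_inner_smul_left, sum_inner]
    rw [hexp]
    apply mul_le_mul_of_nonneg_left _ (by positivity)
    have : γ * B - M * T = ∑ j, (γ * b j - M * p j) := by
      rw [Finset.sum_sub_distrib, ← Finset.mul_sum, ← Finset.mul_sum]
    rw [this]
    apply Finset.sum_le_sum
    intro j _
    rw [hinner j i]
    have h1 := hcs j i
    have hyy : |y j * y i| = 1 := by
      rcases hy i with h | h <;> rcases hy j with h' | h' <;> simp [h, h']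
    have h3 : |y j * y i * inner ℝ (P (x j)) (P (x i))| ≤ p j * p i := by
      rw [abs_mul, hyy, one_mul]; exact h1
    have h4 := (abs_le.1 h3).1
    have hbji : γ * b j ≤ b j * b i := by
      have := hbγ i
      have hbj0 : 0 < b j := lt_of_lt_of_le hγpos (hbγ j)
      nlinarith
    have h5 : p j * p i ≤ M * p j := by
      have := hpM i
      have := hp0 j
      nlinarith
    nlinarith
  -- final chain
  calc ((1 - α) / (n * α)) * ∑ j, max (-(inner ℝ (y i • x i) (y j • x j) : ℝ)) 0
      ≤ ((1 - α) / (n * α)) * (M * T) := by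
        exact mul_le_mul_of_nonneg_left hsummax (div_nonneg (by linarith) (by positivity))
    _ < (n : ℝ)⁻¹ * (γ * B - M * T) := by
        rw [div_mul_eq_mul_div, div_lt_iff₀ (by positivity : (0:ℝ) < n * α)]
        have heq : (n:ℝ)⁻¹ * (γ * B - M * T) * (n * α) = α * (γ * B) - α * (M * T) := by
          field_simp
        rw [heq]
        nlinarith [hkey]
    _ ≤ inner ℝ μ (y i • x i) := hlow
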